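/- arXiv:1203.2345 — 2 statements merged into one kernel-verified Lean document; each statement's English description precedes it below -/
import Mathlib

section
/- Let I = C_k or I = ℤ, let (M_i)_{i∈I} be a family of connected partial linear spaces, let φ_i be a correlation of M_i onto M_{i+1} for each i ∈ I, and let ξ_i = (ξ'_i, ξ''_i) be a correlation of M_i onto M_{−i} for each i ∈ I. Assume φ''_{−i} ∘ ξ'_i ∘ φ''_{i−1} = ξ''_i for all i. Then the map κ = (κ', κ'') given by κ'((i,x)) = [−i, ξ'_i(x)] and κ''([i,y]) = (−i, ξ''_i(y)) is a correlation of ⊛_{i∈I}(M_i, φ_i) onto itself; consequently ⊛_{i∈I}(M_i, φ_i) is self-dual. -/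
/-- A partial linear space: every line has at least two points, every point is on
at least two lines, and two distinct points are on at most one common line. -/
def IsPLS {P L : Type*} (inc : P → L → Prop) : Prop :=
  (∀ l, ∃ a b, a ≠ b ∧ inc a l ∧ inc b l) ∧
  (∀ a, ∃ l m, l ≠ m ∧ inc a l ∧ inc a m) ∧
  (∀ a b l m, inc a l → inc b l → inc a m → inc b m → a = b ∨ l = m)

/-- An isomorphism of incidence structures. -/
structure IncIso {P₁ L₁ P₂ L₂ : Type*} (inc₁ : P₁ → L₁ → Prop) (inc₂ : P₂ → L₂ → Prop) where
  pt : P₁ ≃ P₂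
  ln : L₁ ≃ L₂
  pres : ∀ a l, inc₁ a l ↔ inc₂ (pt a) (ln l)

/-- A correlation of one incidence structure onto another: a pair of bijections,
points to lines and lines to points, reversing incidence. -/
structure Correlation {P₀ L₀ P₁ L₁ : Type*} (inc₀ : P₀ → L₀ → Prop) (inc₁ : P₁ → L₁ → Prop) where
  toLines : P₀ ≃ L₁
  toPoints : L₀ ≃ P₁
  rev : ∀ a l, inc₀ a l ↔ inc₁ (toPoints l) (toLines a)

/-- A closed substructure. -/
def IsClosedSub {P L : Type*} (inc : P → L → Prop) (B' : Set P) (B'' : Set L) : Prop :=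
  (∀ a₁ a₂ l, a₁ ∈ B' → a₂ ∈ B' → a₁ ≠ a₂ → inc a₁ l → inc a₂ l → l ∈ B'') ∧
  (∀ l₁ l₂ a, l₁ ∈ B'' → l₂ ∈ B'' → l₁ ≠ l₂ → inc a l₁ → inc a l₂ → a ∈ B')

/-- One incidence step (within a substructure) between elements (points or lines). -/
def IncStep {P L : Type*} (inc : P → L → Prop) (B' : Set P) (B'' : Set L) :
    (P ⊕ L) → (P ⊕ L) → Prop :=
  fun x y => ∃ a l, a ∈ B' ∧ l ∈ B'' ∧ inc a l ∧
    ((x = Sum.inl a ∧ y = Sum.inr l) ∨ (x = Sum.inr l ∧ y = Sum.inl a))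

/-- Connectivity of a substructure: any two of its elements are joined by a finite
chain of incidences within it. -/
def SubConnected {P L : Type*} (inc : P → L → Prop) (B' : Set P) (B'' : Set L) : Prop :=
  ∀ x y : P ⊕ L, Sum.elim (· ∈ B') (· ∈ B'') x → Sum.elim (· ∈ B') (· ∈ B'') y →
    Relation.ReflTransGen (IncStep inc B' B'') x y

/-- Connectivity of the whole incidence structure. -/
def ConnectedPLS {P L : Type*} (inc : P → L → Prop) : Prop :=
  SubConnected inc Set.univ Set.univ

/-- Collinearity of two points. -/
def Collin {P L : Type*} (inc : P → L → Prop) (a b : P) : Prop := ∃ l, inc a l ∧ inc b l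

/-- A triangle: three pairwise collinear points which are not on a common line. -/
def IsTriangle {P L : Type*} (inc : P → L → Prop) (a b c : P) : Prop :=
  a ≠ b ∧ b ≠ c ∧ a ≠ c ∧ Collin inc a b ∧ Collin inc b c ∧ Collin inc a c ∧
    ¬ ∃ l, inc a l ∧ inc b l ∧ inc c l

/-- The Shult axiom (Γ-space). -/
def Shultenian {P L : Type*} (inc : P → L → Prop) : Prop :=
  ∀ a b c d l, IsTriangle inc a b c → inc a l → inc b l → inc d l → Collin inc d c

/-- Degree of a point: the number of lines through it. -/
noncomputable def ptDeg {P L : Type*} (inc : P → L → Prop) (p : P) : ℕ :=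
  Set.ncard {l | inc p l}

/-- Size of a line: the number of points on it. -/
noncomputable def lnSize {P L : Type*} (inc : P → L → Prop) (l : L) : ℕ :=
  Set.ncard {p | inc p l}

/-- `G` is a cyclic group (with distinguished generator `1`) which is either
infinite or of even order greater than `2`. -/
def GoodGroup (G : Type*) [CommRing G] : Prop :=
  Nonempty (G ≃+* ℤ) ∨ ∃ k : ℕ, 2 < k ∧ Even k ∧ Nonempty (G ≃+* ZMod k)

/-- `I` is (as a cyclic group with generator `1`) either `ℤ` or `C_k`. -/
def CyclicIndex (I : Type*) [CommRing I] : Prop :=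
  Nonempty (I ≃+* ℤ) ∨ ∃ k : ℕ, 0 < k ∧ Nonempty (I ≃+* ZMod k)

/-- Incidence on the disjoint union `S ⊕ L`, in either direction. -/
def dualInc {S L : Type*} (inc0 : S → L → Prop) : (S ⊕ L) → (S ⊕ L) → Prop
  | Sum.inl a, Sum.inr b => inc0 a b
  | Sum.inr b, Sum.inl a => inc0 a b
  | _, _ => False

/-- Points of the multiplied structure `⊛_G(∘, M₀)`. -/
def starPt (G : Type*) [CommRing G] (S L : Type*) : Set (G × (S ⊕ L)) :=
  {p | (Even p.1 ∧ ∃ a : S, p.2 = Sum.inl a) ∨ (¬ Even p.1 ∧ ∃ l : L, p.2 = Sum.inr l)}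

/-- Lines of the multiplied structure `⊛_G(∘, M₀)`. -/
def starLn (G : Type*) [CommRing G] (S L : Type*) : Set (G × (S ⊕ L)) :=
  {q | (Even q.1 ∧ ∃ l : L, q.2 = Sum.inr l) ∨ (¬ Even q.1 ∧ ∃ a : S, q.2 = Sum.inl a)}

/-- Incidence of the multiplied structure `⊛_G(∘, M₀)`:
`(i,a) I [j,b]` iff (`i = j` and `a I₀ b` or `b I₀ a`) or (`i = j + 1` and `a = b`). -/
def starInc (G : Type*) [CommRing G] {S L : Type*} (inc0 : S → L → Prop) :
    ↥(starPt G S L) → ↥(starLn G S L) → Prop :=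
  fun p l => (p.val.1 = l.val.1 ∧ dualInc inc0 p.val.2 l.val.2) ∨
    (p.val.1 = l.val.1 + 1 ∧ p.val.2 = l.val.2)

/-- The relation `⊹` on `⊛_G(∘, M₀)`: `p ⊹ l` iff `p I l` and `i = j + 1`. -/
def starDod (G : Type*) [CommRing G] {S L : Type*} (inc0 : S → L → Prop)
    (p : ↥(starPt G S L)) (l : ↥(starLn G S L)) : Prop :=
  starInc G inc0 p l ∧ p.val.1 = l.val.1 + 1

/-- The relation `⊹₁`. -/
def dod1 {P L : Type*} (inc : P → L → Prop) (p : P) (l : L) : Prop :=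
  inc p l ∧ ∃ q, q ≠ p ∧ inc q l ∧ ∀ k m n, l ≠ k → l ≠ m → l ≠ n → m ≠ n →
    inc q k → inc p m → inc p n → (∃ x, inc x k ∧ inc x m) → ¬ ∃ x, inc x k ∧ inc x n

/-- The relation `◁`: `a ◁ l` iff `a` is not on `l` and there is exactly one line
through `a` missing `l`. -/
def corrRel {P L : Type*} (inc : P → L → Prop) (a : P) (l : L) : Prop :=
  ¬ inc a l ∧ ∃! m, inc a m ∧ ¬ ∃ x, inc x l ∧ inc x m

/-- The relation `⊹₂`. -/
def dod2 {P L : Type*} (inc : P → L → Prop) (p : P) (l : L) : Prop :=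
  inc p l ∧ ∃ a, ¬ Collin inc p a ∧ corrRel inc a l

/-- The family `{B_i}` is a covering of the structure by connected closed
substructures satisfying conditions (1)-(7). -/
def GoodCover {P L I : Type*} (inc : P → L → Prop) (B' : I → Set P) (B'' : I → Set L) : Prop :=
  (∀ p, ∃ i, p ∈ B' i) ∧ (∀ l, ∃ i, l ∈ B'' i) ∧
  (∀ i, IsClosedSub inc (B' i) (B'' i)) ∧
  (∀ i, SubConnected inc (B' i) (B'' i)) ∧
  (∀ i₁ i₂, (B' i₁ ∩ B' i₂).Nonempty → B' i₁ = B' i₂) ∧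
  (∀ i₁ i₂, (B'' i₁ ∩ B'' i₂).Nonempty → B'' i₁ = B'' i₂) ∧
  (∀ i, ∀ d ∈ B' i, ∃ m, inc d m ∧ m ∉ B'' i) ∧
  (∀ i, ∀ m ∈ B'' i, ∃ d, inc d m ∧ d ∉ B' i) ∧
  (∀ i, IsClosedSub inc (B' i)ᶜ (B'' i)ᶜ) ∧
  (∀ (i : I) (p : P) (m₁ m₂ m₃ : L) (d₁ d₂ d₃ : P),
    inc p m₁ → inc p m₂ → inc p m₃ → inc d₁ m₁ → inc d₂ m₂ → inc d₃ m₃ →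
    m₁ ∈ B'' i → m₂ ∈ B'' i → m₃ ∈ B'' i → d₁ ∉ B' i → d₂ ∉ B' i → d₃ ∉ B' i →
    ∃ n, inc d₁ n ∧ inc d₂ n ∧ inc d₃ n) ∧
  (∀ (i : I) (n : L) (d₁ d₂ d₃ : P) (m₁ m₂ m₃ : L),
    inc d₁ n → inc d₂ n → inc d₃ n → inc d₁ m₁ → inc d₂ m₂ → inc d₃ m₃ →
    d₁ ∈ B' i → d₂ ∈ B' i → d₃ ∈ B' i → m₁ ∉ B'' i → m₂ ∉ B'' i → m₃ ∉ B'' i →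
    ∃ q, inc q m₁ ∧ inc q m₂ ∧ inc q m₃)

/-- The relation `ρ` on the index set: `j ρ i` iff `j ≠ i` and some line of `B''_j`
is incident with some point of `B'_i`. -/
def rhoRel {P L I : Type*} (inc : P → L → Prop) (B' : I → Set P) (B'' : I → Set L)
    (j i : I) : Prop :=
  j ≠ i ∧ ∃ l ∈ B'' j, ∃ a ∈ B' i, inc a l

/-- The relation `⊹` determined by a covering: `a ⊹ m` iff `a I m` and no member of
the covering contains both `a` and `m`. -/
def dodRel {P L I : Type*} (inc : P → L → Prop) (B' : I → Set P) (B'' : I → Set L)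
    (a : P) (m : L) : Prop :=
  inc a m ∧ ¬ ∃ i, a ∈ B' i ∧ m ∈ B'' i

/-- Incidence of the structure `⊛_{i∈I}(M_i, φ_i)` obtained by glueing the family
`(M_i)` along the correlations `φ_i`. -/
def glueInc {I : Type*} [CommRing I] {P Lf : I → Type*} (inc : ∀ i, P i → Lf i → Prop)
    (φ : ∀ i, Correlation (inc i) (inc (i + 1))) :
    (Σ i, P i) → (Σ i, Lf i) → Prop :=
  fun p l => (∃ (i : I) (a : P i) (m : Lf i), p = ⟨i, a⟩ ∧ l = ⟨i, m⟩ ∧ inc i a m) ∨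
    (∃ (j : I) (m : Lf j), p = ⟨j + 1, (φ j).toPoints m⟩ ∧ l = ⟨j, m⟩)

/-- The composite `φ_{n-1} ∘ ⋯ ∘ φ_1 ∘ φ_0` acting on the elements of `M₀`. -/
def corrChain {I : Type*} [CommRing I] {P Lf : I → Type*} (inc : ∀ i, P i → Lf i → Prop)
    (φ : ∀ i, Correlation (inc i) (inc (i + 1))) :
    (n : ℕ) → (P 0 ⊕ Lf 0) → (P (n : I) ⊕ Lf (n : I))
  | 0 => cast (by rw [Nat.cast_zero])
  | n + 1 => fun x =>
      cast (by rw [Nat.cast_add_one])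
        (Sum.elim (fun a => Sum.inr ((φ (n : I)).toLines a))
          (fun m => Sum.inl ((φ (n : I)).toPoints m)) (corrChain inc φ n x))

/-- The correlative multiplying `⊛_k(κ₀, M₀)`. -/
def corInc {S L : Type*} (k : ℕ) (inc0 : S → L → Prop) (kap : L → S) :
    ZMod k × S → ZMod k × L → Prop :=
  fun p l => (p.1 = l.1 ∧ inc0 p.2 l.2) ∨ (p.1 = l.1 + 1 ∧ p.2 = kap l.2)

theorem cast_cancel {α β : Sort _} {h h' : α = β} {a b : α}
    (e : cast h a = cast h' b) : a = b := by
  subst h; simpa using e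

/-- given correlations `ξ_i : M_i → M_{-i}` compatible with the
glueing correlations `φ_i` (namely `φ''_{-i} ∘ ξ'_i ∘ φ''_{i-1} = ξ''_{i-1}`,
written below with `i` shifted by one), the map `κ((i,x)) = (-i, ξ_i(x))` is a
correlation of `⊛_{i∈I}(M_i, φ_i)` onto itself; consequently `⊛_{i∈I}(M_i, φ_i)`
is self-dual. -/
theorem glue_self_dual {I : Type} [CommRing I] (hI : CyclicIndex I)
    (P Lf : I → Type) (inc : ∀ i, P i → Lf i → Prop)
    (hPLS : ∀ i, IsPLS (inc i)) (hconn : ∀ i, ConnectedPLS (inc i))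
    (φ : ∀ i, Correlation (inc i) (inc (i + 1)))
    (ξ : ∀ i, Correlation (inc i) (inc (-i)))
    (hcomp : ∀ (i : I) (m : Lf i),
      cast (congrArg P (by ring : -(i + 1) + 1 = -i))
        ((φ (-(i + 1))).toPoints ((ξ (i + 1)).toLines ((φ i).toPoints m)))
        = (ξ i).toPoints m) :
    ∃ κ : Correlation (glueInc inc φ) (glueInc inc φ),
      (∀ (i : I) (x : P i), κ.toLines ⟨i, x⟩ = ⟨-i, (ξ i).toLines x⟩) ∧
      (∀ (i : I) (y : Lf i), κ.toPoints ⟨i, y⟩ = ⟨-i, (ξ i).toPoints y⟩) := by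

  classical
  refine ⟨⟨Equiv.sigmaCongr (Equiv.neg I) (fun i => (ξ i).toLines),
          Equiv.sigmaCongr (Equiv.neg I) (fun i => (ξ i).toPoints), ?_⟩,
          fun i x => rfl, fun i y => rfl⟩
  rintro ⟨i₀, x⟩ ⟨j₀, y⟩
  show glueInc inc φ ⟨i₀, x⟩ ⟨j₀, y⟩ ↔
    glueInc inc φ ⟨-j₀, (ξ j₀).toPoints y⟩ ⟨-i₀, (ξ i₀).toLines x⟩
  constructor
  · rintro (⟨i, a, m, h1, h2, him⟩ | ⟨j, m, h1, h2⟩)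
    · injection h1 with hi ha
      subst hi
      obtain rfl := eq_of_heq ha
      injection h2 with hj hm
      subst hj
      obtain rfl := eq_of_heq hm
      exact Or.inl ⟨_, _, _, rfl, rfl, ((ξ _).rev _ _).mp him⟩
    · injection h2 with hj hm
      subst hj
      obtain rfl := eq_of_heq hm
      injection h1 with hi hx
      subst hi
      obtain rfl := eq_of_heq hx
      refine Or.inr ⟨-(j₀+1), (ξ (j₀+1)).toLines ((φ j₀).toPoints y), ?_, rfl⟩
      refine Sigma.ext (by ring) ?_
      show HEq ((ξ j₀).toPoints y)
        ((φ (-(j₀+1))).toPoints ((ξ (j₀+1)).toLines ((φ j₀).toPoints y)))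
      rw [← hcomp j₀ y]
      exact cast_heq _ _
  · rintro (⟨i, a, m, h1, h2, him⟩ | ⟨j, m, h1, h2⟩)
    · injection h1 with hi ha
      injection h2 with hj hm
      subst hi
      have hij : i₀ = j₀ := neg_injective (by linear_combination hj)
      subst hij
      obtain rfl := eq_of_heq ha
      obtain rfl := eq_of_heq hm
      exact Or.inl ⟨_, x, y, rfl, rfl, ((ξ _).rev x y).mpr him⟩
    · injection h2 with hj hm
      subst hj
      obtain rfl := eq_of_heq hm
      injection h1 with hi hx
      have h5 : i₀ = j₀ + 1 := by linear_combination hi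
      subst h5
      have h4' : cast (congrArg P (by ring : -(j₀+1) + 1 = -j₀))
          ((φ (-(j₀+1))).toPoints ((ξ (j₀+1)).toLines x)) = (ξ j₀).toPoints y :=
        cast_eq_iff_heq.mpr hx.symm
      rw [← hcomp j₀ y] at h4'
      have h6 : x = (φ j₀).toPoints y :=
        (ξ (j₀+1)).toLines.injective ((φ (-(j₀+1))).toPoints.injective (cast_cancel h4'))
      subst h6
      exact Or.inr ⟨j₀, y, rfl, rfl⟩
end

section
/- Let (M_i)_{i∈I} be a family of connected partial linear spaces with correlations φ_i of M_i onto M_{i+1}, and write M₀ for the structure M_0 of the family. (i) If I = ℤ then ⊛_{i∈I}(M_i, φ_i) is isomorphic to ⊛_ℤ(∘, M₀). (ii) If I = C_k with k even and φ_{k−1} ∘ ⋯ ∘ φ_1 ∘ φ_0 = id, then ⊛_{i∈I}(M_i, φ_i) is isomorphic to ⊛_{C_k}(∘, M₀). -/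
section
variable {I : Type} [CommRing I] {P Lf : I → Type} {inc : ∀ i, P i → Lf i → Prop}
  (φ : ∀ i, Correlation (inc i) (inc (i + 1)))

def stepE (i : I) : (P i ⊕ Lf i) ≃ (P (i+1) ⊕ Lf (i+1)) :=
  (Equiv.sumCongr (φ i).toLines (φ i).toPoints).trans (Equiv.sumComm _ _)

lemma stepE_dual (i : I) (x y : P i ⊕ Lf i) :
    dualInc (inc (i+1)) (stepE φ i x) (stepE φ i y) ↔ dualInc (inc i) x y := by
  cases x <;> cases y <;> simp [stepE, dualInc] <;> exact ((φ i).rev _ _).symm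

lemma stepE_isLeft (i : I) (x : P i ⊕ Lf i) : (stepE φ i x).isLeft = !x.isLeft := by
  cases x <;> rfl

lemma sum_inl_getLeft {α β : Type*} (x : α ⊕ β) (h : x.isLeft) : Sum.inl (x.getLeft h) = x := by
  cases x with
  | inl a => rfl
  | inr b => simp at h

lemma sum_inr_getRight {α β : Type*} (x : α ⊕ β) (h : x.isRight) : Sum.inr (x.getRight h) = x := by
  cases x with
  | inl a => simp at h
  | inr b => rfl

theorem buildIso
    (c : ∀ i : I, (P 0 ⊕ Lf 0) ≃ (P i ⊕ Lf i))
    (hrec : ∀ (i : I) x, c (i+1) x = stepE φ i (c i x))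
    (hdual : ∀ (i : I) x y, dualInc (inc i) (c i x) (c i y) ↔ dualInc (inc 0) x y)
    (hE : ∀ i : I, Even i → ∀ x, (c i x).isLeft = x.isLeft)
    (hO : ∀ i : I, ¬ Even i → ∀ x, (c i x).isLeft = !x.isLeft) :
    Nonempty (IncIso (glueInc inc φ) (starInc I (inc 0))) := by
  -- key isLeft facts
  have keyPt : ∀ (i : I) (a : P i), ((c i).symm (Sum.inl a)) ∈
      ({x | (Even i ∧ ∃ b : P 0, x = Sum.inl b) ∨ (¬ Even i ∧ ∃ l : Lf 0, x = Sum.inr l)} :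
        Set (P 0 ⊕ Lf 0)) := by
    intro i a
    have h1 : ((c i) ((c i).symm (Sum.inl a))).isLeft = true := by simp
    by_cases h : Even i
    · rw [hE i h] at h1
      cases hx : (c i).symm (Sum.inl a) with
      | inl b => exact Or.inl ⟨h, b, rfl⟩
      | inr l => rw [hx] at h1; simp at h1
    · rw [hO i h] at h1
      cases hx : (c i).symm (Sum.inl a) with
      | inl b => rw [hx] at h1; simp at h1
      | inr l => exact Or.inr ⟨h, l, rfl⟩
  have keyLn : ∀ (i : I) (m : Lf i), ((c i).symm (Sum.inr m)) ∈
      ({x | (Even i ∧ ∃ l : Lf 0, x = Sum.inr l) ∨ (¬ Even i ∧ ∃ b : P 0, x = Sum.inl b)} :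
        Set (P 0 ⊕ Lf 0)) := by
    intro i m
    have h1 : ((c i) ((c i).symm (Sum.inr m))).isLeft = false := by simp
    by_cases h : Even i
    · rw [hE i h] at h1
      cases hx : (c i).symm (Sum.inr m) with
      | inl b => rw [hx] at h1; simp at h1
      | inr l => exact Or.inl ⟨h, l, rfl⟩
    · rw [hO i h] at h1
      cases hx : (c i).symm (Sum.inr m) with
      | inl b => exact Or.inr ⟨h, b, rfl⟩
      | inr l => rw [hx] at h1; simp at h1
  -- isLeft of c i x for points of starPt
  have ptLeft : ∀ q : ↥(starPt I (P 0) (Lf 0)), (c q.val.1 q.val.2).isLeft = true := by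
    rintro ⟨⟨i, x⟩, (⟨he, a, ha⟩ | ⟨ho, l, hl⟩)⟩
    · simp only at ha ⊢
      rw [hE i he, ha]; rfl
    · simp only at hl ⊢
      rw [hO i ho, hl]; rfl
  have lnRight : ∀ q : ↥(starLn I (P 0) (Lf 0)), (c q.val.1 q.val.2).isRight = true := by
    rintro ⟨⟨i, x⟩, (⟨he, l, hl⟩ | ⟨ho, a, ha⟩)⟩
    · simp only at hl ⊢
      subst hl
      have h1 := hE i he (Sum.inr l)
      simp only [Sum.isLeft_inr] at h1
      cases h2 : (c i) (Sum.inr l) with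
      | inl b => rw [h2] at h1; simp at h1
      | inr l2 => rfl
    · simp only at ha ⊢
      subst ha
      have h1 := hO i ho (Sum.inl a)
      simp only [Sum.isLeft_inl] at h1
      cases h2 : (c i) (Sum.inl a) with
      | inl b => rw [h2] at h1; simp at h1
      | inr l2 => rfl
  refine ⟨⟨?_, ?_, ?_⟩⟩
  · -- point equiv
    exact
    { toFun := fun p => ⟨(p.1, (c p.1).symm (Sum.inl p.2)), keyPt p.1 p.2⟩
      invFun := fun q => ⟨q.val.1, ((c q.val.1) q.val.2).getLeft (ptLeft q)⟩
      left_inv := by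
        rintro ⟨i, a⟩
        have hx : ((c i) ((c i).symm (Sum.inl a))).isLeft = true := by simp
        have h2 : Sum.inl (((c i) ((c i).symm (Sum.inl a))).getLeft hx) = Sum.inl a :=
          (sum_inl_getLeft _ hx).trans (Equiv.apply_symm_apply _ _)
        exact congrArg (fun z => (⟨i, z⟩ : Σ i, P i)) (Sum.inl_injective h2)
      right_inv := by
        rintro ⟨⟨i, x⟩, hm⟩
        apply Subtype.ext
        have hx : ((c i) x).isLeft = true := ptLeft ⟨(i, x), hm⟩
        have h2 : (c i).symm (Sum.inl (((c i) x).getLeft hx)) = x := by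
          rw [sum_inl_getLeft _ hx]; exact Equiv.symm_apply_apply _ _
        simpa using h2 }
  · -- line equiv
    exact
    { toFun := fun p => ⟨(p.1, (c p.1).symm (Sum.inr p.2)), keyLn p.1 p.2⟩
      invFun := fun q => ⟨q.val.1, ((c q.val.1) q.val.2).getRight (lnRight q)⟩
      left_inv := by
        rintro ⟨i, m⟩
        have hx : ((c i) ((c i).symm (Sum.inr m))).isRight = true := by simp
        have h2 : Sum.inr (((c i) ((c i).symm (Sum.inr m))).getRight hx) = Sum.inr m :=
          (sum_inr_getRight _ hx).trans (Equiv.apply_symm_apply _ _)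
        exact congrArg (fun z => (⟨i, z⟩ : Σ i, Lf i)) (Sum.inr_injective h2)
      right_inv := by
        rintro ⟨⟨i, x⟩, hm⟩
        apply Subtype.ext
        have hx : ((c i) x).isRight = true := lnRight ⟨(i, x), hm⟩
        have h2 : (c i).symm (Sum.inr (((c i) x).getRight hx)) = x := by
          rw [sum_inr_getRight _ hx]; exact Equiv.symm_apply_apply _ _
        simpa using h2 }
  · intro p l
    constructor
    · rintro (⟨i', a', m', rfl, rfl, hinc⟩ | ⟨j', m', rfl, rfl⟩)
      · refine Or.inl ⟨rfl, ?_⟩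
        show dualInc (inc 0) ((c i').symm (Sum.inl a')) ((c i').symm (Sum.inr m'))
        rw [← hdual i']
        simp only [Equiv.apply_symm_apply]
        exact hinc
      · refine Or.inr ⟨rfl, ?_⟩
        show (c (j' + 1)).symm (Sum.inl ((φ j').toPoints m')) = (c j').symm (Sum.inr m')
        have h3 : (c (j' + 1)) ((c j').symm (Sum.inr m')) = Sum.inl ((φ j').toPoints m') := by
          rw [hrec]
          simp only [Equiv.apply_symm_apply]
          rfl
        calc (c (j' + 1)).symm (Sum.inl ((φ j').toPoints m'))
            = (c (j' + 1)).symm ((c (j' + 1)) ((c j').symm (Sum.inr m'))) := by rw [h3]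
          _ = (c j').symm (Sum.inr m') := Equiv.symm_apply_apply _ _
    · obtain ⟨i, a⟩ := p
      obtain ⟨j, m⟩ := l
      rintro (⟨hij, hd⟩ | ⟨hij, hsnd⟩)
      · 
        subst hij
        refine Or.inl ⟨i, a, m, rfl, rfl, ?_⟩
        have hd' : dualInc (inc 0) ((c i).symm (Sum.inl a)) ((c i).symm (Sum.inr m)) := hd
        rw [← hdual i] at hd'
        simp only [Equiv.apply_symm_apply] at hd'
        exact hd'
      · 
        have hij' : i = j + 1 := hij
        subst hij'
        have hsnd' : (c (j + 1)).symm (Sum.inl a) = (c j).symm (Sum.inr m) := hsnd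
        have h4 : (Sum.inl a : P (j+1) ⊕ Lf (j+1)) = Sum.inl ((φ j).toPoints m) := by
          have h5 := congrArg (c (j + 1)) hsnd'
          rw [Equiv.apply_symm_apply, hrec, Equiv.apply_symm_apply] at h5
          exact h5
        obtain rfl := Sum.inl_injective h4
        exact Or.inr ⟨j, m, rfl, rfl⟩

end

section IntCase
variable {P Lf : ℤ → Type} {inc : ∀ i : ℤ, P i → Lf i → Prop}
  (φ : ∀ i : ℤ, Correlation (inc i) (inc (i + 1)))

def cIntNat : ∀ n : ℕ, (P 0 ⊕ Lf 0) ≃ (P (Int.ofNat n) ⊕ Lf (Int.ofNat n))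
  | 0 => Equiv.refl _
  | n+1 => (cIntNat n).trans (stepE φ (Int.ofNat n))

def cIntNeg : ∀ n : ℕ, (P 0 ⊕ Lf 0) ≃ (P (Int.negSucc n) ⊕ Lf (Int.negSucc n))
  | 0 => (stepE φ (Int.negSucc 0)).symm
  | n+1 => (cIntNeg n).trans (stepE φ (Int.negSucc (n+1))).symm

def cInt : ∀ i : ℤ, (P 0 ⊕ Lf 0) ≃ (P i ⊕ Lf i)
  | .ofNat n => cIntNat φ n
  | .negSucc n => cIntNeg φ n

lemma cInt_rec : ∀ (i : ℤ) (x : P 0 ⊕ Lf 0), cInt φ (i+1) x = stepE φ i (cInt φ i x) := by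
  intro i x
  cases i with
  | ofNat n =>
    show cInt φ (Int.ofNat (n+1)) x = _
    rfl
  | negSucc n =>
    cases n with
    | zero =>
      show cInt φ (Int.ofNat 0) x = stepE φ (Int.negSucc 0) (cIntNeg φ 0 x)
      exact (Equiv.apply_symm_apply _ x).symm
    | succ n =>
      show cInt φ (Int.negSucc n) x = stepE φ (Int.negSucc (n+1)) (cIntNeg φ (n+1) x)
      exact (Equiv.apply_symm_apply _ _).symm

lemma cInt_dual : ∀ (i : ℤ) (x y : P 0 ⊕ Lf 0),
    dualInc (inc i) (cInt φ i x) (cInt φ i y) ↔ dualInc (inc 0) x y := by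
  intro i x y
  cases i with
  | ofNat n =>
    induction n with
    | zero => exact Iff.rfl
    | succ n ih =>
      exact (stepE_dual φ (Int.ofNat n) (cIntNat φ n x) (cIntNat φ n y)).trans ih
  | negSucc n =>
    induction n with
    | zero =>
      have h := stepE_dual φ (Int.negSucc 0) (cIntNeg φ 0 x) (cIntNeg φ 0 y)
      rw [show stepE φ (Int.negSucc 0) (cIntNeg φ 0 x) = x from Equiv.apply_symm_apply _ x,
        show stepE φ (Int.negSucc 0) (cIntNeg φ 0 y) = y from Equiv.apply_symm_apply _ y] at h
      exact h.symm
    | succ n ih =>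
      have h := stepE_dual φ (Int.negSucc (n+1)) (cIntNeg φ (n+1) x) (cIntNeg φ (n+1) y)
      rw [show stepE φ (Int.negSucc (n+1)) (cIntNeg φ (n+1) x) = cIntNeg φ n x from
          Equiv.apply_symm_apply _ _,
        show stepE φ (Int.negSucc (n+1)) (cIntNeg φ (n+1) y) = cIntNeg φ n y from
          Equiv.apply_symm_apply _ _] at h
      exact h.symm.trans ih

lemma cInt_flip (i : ℤ) (x : P 0 ⊕ Lf 0) :
    (cInt φ (i+1) x).isLeft = !(cInt φ i x).isLeft := by
  rw [cInt_rec, stepE_isLeft]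

lemma beq_flip (b : Bool) (p q : Prop) [Decidable p] [Decidable q] (h : p ↔ ¬ q) :
    (b == decide p) = !(b == decide q) := by
  by_cases hq : q <;> by_cases hp : p <;> simp_all

lemma cInt_isLeft : ∀ (i : ℤ) (x : P 0 ⊕ Lf 0),
    (cInt φ i x).isLeft = (x.isLeft == decide (Even i)) := by
  have base : ∀ x : P 0 ⊕ Lf 0, (cInt φ 0 x).isLeft = x.isLeft := fun x => rfl
  intro i x
  induction i using Int.induction_on with
  | zero =>
    rw [base, decide_eq_true (Even.zero)]
    cases x.isLeft <;> rfl
  | succ n ih =>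
    rw [cInt_flip, ih, ← beq_flip x.isLeft _ _ Int.even_add_one]
  | pred n ih =>
    have h := cInt_flip φ (-(n:ℤ) - 1) x
    rw [show (-(n:ℤ) - 1 + 1) = -(n:ℤ) by ring] at h
    have h2 : (cInt φ (-(n:ℤ) - 1) x).isLeft = !(cInt φ (-(n:ℤ)) x).isLeft := by
      rw [h]; simp
    rw [h2, ih, ← beq_flip x.isLeft _ _ (show Even (-(n:ℤ) - 1) ↔ ¬ Even (-(n:ℤ)) from Int.even_sub_one)]

end IntCase

section GenChain
variable {I : Type} [CommRing I] {P Lf : I → Type} {inc : ∀ i, P i → Lf i → Prop}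
  (φ : ∀ i, Correlation (inc i) (inc (i + 1)))

def cNatE : ∀ n : ℕ, (P 0 ⊕ Lf 0) ≃ (P ((n : ℕ) : I) ⊕ Lf ((n : ℕ) : I))
  | 0 => Equiv.cast (by rw [Nat.cast_zero])
  | n+1 => ((cNatE n).trans (stepE φ ((n : ℕ) : I))).trans (Equiv.cast (by rw [Nat.cast_add_one]))

lemma stepE_heq {a b : I} (h : a = b) {x : P a ⊕ Lf a} {y : P b ⊕ Lf b} (hxy : HEq x y) :
    HEq (stepE φ a x) (stepE φ b y) := by subst h; cases hxy; rfl

lemma dual_heq {a b : I} (h : a = b) {x y : P a ⊕ Lf a} {x' y' : P b ⊕ Lf b}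
    (hx : HEq x x') (hy : HEq y y') : dualInc (inc a) x y ↔ dualInc (inc b) x' y' := by
  subst h; cases hx; cases hy; rfl

lemma isLeft_heq {a b : I} (h : a = b) {x : P a ⊕ Lf a} {y : P b ⊕ Lf b} (hxy : HEq x y) :
    x.isLeft = y.isLeft := by subst h; cases hxy; rfl

lemma cNatE_dual : ∀ (n : ℕ) (x y : P 0 ⊕ Lf 0),
    dualInc (inc ((n : ℕ) : I)) (cNatE φ n x) (cNatE φ n y) ↔ dualInc (inc 0) x y := by
  intro n
  induction n with
  | zero =>
    intro x y
    exact dual_heq (Nat.cast_zero) (cast_heq _ _) (cast_heq _ _)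
  | succ n ih =>
    intro x y
    refine (dual_heq (Nat.cast_add_one n) (cast_heq _ _) (cast_heq _ _)).trans ?_
    exact (stepE_dual φ ((n : ℕ) : I) (cNatE φ n x) (cNatE φ n y)).trans (ih x y)

lemma cNatE_isLeft : ∀ (n : ℕ) (x : P 0 ⊕ Lf 0),
    (cNatE φ n x).isLeft = (x.isLeft == decide (Even n)) := by
  intro n
  induction n with
  | zero =>
    intro x
    rw [isLeft_heq (x := cNatE φ 0 x) (y := x) Nat.cast_zero (cast_heq _ _)]
    rw [decide_eq_true (Even.zero)]
    cases x.isLeft <;> rfl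
  | succ n ih =>
    intro x
    rw [isLeft_heq (x := cNatE φ (n+1) x) (y := stepE φ ((n:ℕ):I) (cNatE φ n x))
      (Nat.cast_add_one n) (cast_heq _ _)]
    rw [stepE_isLeft, ih, ← beq_flip x.isLeft _ _ Nat.even_add_one]

lemma cNatE_eq_corrChain : ∀ (n : ℕ) (x : P 0 ⊕ Lf 0), cNatE φ n x = corrChain inc φ n x := by
  intro n
  induction n with
  | zero => intro x; rfl
  | succ n ih =>
    intro x
    show Equiv.cast _ (stepE φ ((n:ℕ):I) (cNatE φ n x)) = cast _ (Sum.elim _ _ (corrChain inc φ n x))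
    rw [← ih x]
    cases cNatE φ n x <;> rfl

end GenChain

lemma even_natCast_zmod (k : ℕ) (hk : 0 < k) (hke : Even k) (n : ℕ) :
    Even ((n : ZMod k)) ↔ Even n := by
  haveI : NeZero k := ⟨hk.ne'⟩
  constructor
  · rintro ⟨r, hr⟩
    have hrv : ((r.val : ℕ) : ZMod k) = r := ZMod.natCast_rightInverse r
    have h1 : ((n : ℕ) : ZMod k) = ((r.val + r.val : ℕ) : ZMod k) := by
      push_cast
      rw [hrv, ← hr]
    have hmod : n ≡ r.val + r.val [MOD k] := (ZMod.natCast_eq_natCast_iff _ _ _).mp h1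
    have h2 : n ≡ r.val + r.val [MOD 2] := hmod.of_dvd hke.two_dvd
    rw [Nat.even_iff]
    have h3 : n % 2 = (r.val + r.val) % 2 := h2
    omega
  · rintro ⟨t, rfl⟩
    exact ⟨(t : ZMod k), by push_cast; rfl⟩

section ZModCase
variable {k : ℕ} {P Lf : ZMod k → Type} {inc : ∀ i : ZMod k, P i → Lf i → Prop}
  (φ : ∀ i : ZMod k, Correlation (inc i) (inc (i + 1)))

lemma cNatE_period (hcor : ∀ x, cNatE φ k x = Equiv.cast (by rw [ZMod.natCast_self]) x) :
    ∀ (n : ℕ) (x : P 0 ⊕ Lf 0), HEq (cNatE φ (k + n) x) (cNatE φ n x) := by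
  intro n
  induction n with
  | zero =>
    intro x
    have h1 : HEq (cNatE φ (k + 0) x) x := by
      rw [show k + 0 = k from rfl, hcor x]
      exact cast_heq _ _
    have h0 : HEq (cNatE φ 0 x) x := cast_heq _ _
    exact h1.trans h0.symm
  | succ n ih =>
    intro x
    have h1 : HEq (cNatE φ (k + (n+1)) x) (stepE φ ((k + n : ℕ) : ZMod k) (cNatE φ (k + n) x)) :=
      cast_heq _ _
    have h2 : HEq (cNatE φ (n+1) x) (stepE φ ((n : ℕ) : ZMod k) (cNatE φ n x)) := cast_heq _ _
    have hcst : ((k + n : ℕ) : ZMod k) = ((n : ℕ) : ZMod k) := by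
      push_cast [ZMod.natCast_self]
      ring
    exact (h1.trans (stepE_heq φ hcst (ih x))).trans h2.symm

lemma cNatE_congr (hcor : ∀ x, cNatE φ k x = Equiv.cast (by rw [ZMod.natCast_self]) x)
    (hk : 0 < k) :
    ∀ (m n : ℕ), ((m : ℕ) : ZMod k) = ((n : ℕ) : ZMod k) →
      ∀ x : P 0 ⊕ Lf 0, HEq (cNatE φ m x) (cNatE φ n x) := by
  have aux : ∀ (t n : ℕ) (x : P 0 ⊕ Lf 0), HEq (cNatE φ (n + t * k) x) (cNatE φ n x) := by
    intro t
    induction t with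
    | zero => intro n x; rw [show n + 0 * k = n by ring]
    | succ t ih =>
      intro n x
      rw [show n + (t+1) * k = k + (n + t * k) by ring]
      exact (cNatE_period φ hcor (n + t * k) x).trans (ih n x)
  intro m n hmn x
  have hmod : m ≡ n [MOD k] := (ZMod.natCast_eq_natCast_iff _ _ _).mp hmn
  have h4 := aux (m / k) (m % k) x
  rw [Nat.mod_add_div' m k] at h4
  have h5 := aux (n / k) (n % k) x
  rw [Nat.mod_add_div' n k] at h5
  have h6 : m % k = n % k := hmod
  rw [h6] at h4
  exact h4.trans h5.symm

end ZModCase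


/-- (i) for `I = ℤ`, `⊛_{i∈ℤ}(M_i, φ_i) ≅ ⊛_ℤ(∘, M₀)`;
(ii) for `I = C_k` with `k` even and `φ_{k-1} ∘ ⋯ ∘ φ_1 ∘ φ_0 = id`,
`⊛_{i∈C_k}(M_i, φ_i) ≅ ⊛_{C_k}(∘, M₀)`. -/
theorem glue_iso_star :
    (∀ (P Lf : ℤ → Type) (inc : ∀ i, P i → Lf i → Prop),
      (∀ i, IsPLS (inc i)) → (∀ i, ConnectedPLS (inc i)) →
      ∀ φ : ∀ i, Correlation (inc i) (inc (i + 1)),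
        Nonempty (IncIso (glueInc inc φ) (starInc ℤ (inc 0)))) ∧
    (∀ (k : ℕ), 0 < k → Even k →
      ∀ (P Lf : ZMod k → Type) (inc : ∀ i, P i → Lf i → Prop),
      (∀ i, IsPLS (inc i)) → (∀ i, ConnectedPLS (inc i)) →
      ∀ φ : ∀ i, Correlation (inc i) (inc (i + 1)),
        (∀ x : P 0 ⊕ Lf 0, corrChain inc φ k x = cast (by rw [ZMod.natCast_self]) x) →
        Nonempty (IncIso (glueInc inc φ) (starInc (ZMod k) (inc 0)))) := by
  constructor
  · intro P Lf inc _ _ φ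
    refine buildIso φ (cInt φ) (cInt_rec φ) (cInt_dual φ) ?_ ?_
    · intro i hi x
      rw [cInt_isLeft, decide_eq_true hi]
      cases x.isLeft <;> rfl
    · intro i hi x
      rw [cInt_isLeft, decide_eq_false hi]
      cases x.isLeft <;> rfl
  · intro k hk hke P Lf inc _ _ φ hcor
    haveI : NeZero k := ⟨hk.ne'⟩
    have hcor' : ∀ x : P 0 ⊕ Lf 0,
        cNatE φ k x = Equiv.cast (by rw [ZMod.natCast_self]) x := by
      intro x
      rw [cNatE_eq_corrChain φ k x, hcor x]; rfl
    have hiv : ∀ i : ZMod k, ((i.val : ℕ) : ZMod k) = i := fun i => ZMod.natCast_rightInverse i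
    set c : ∀ i : ZMod k, (P 0 ⊕ Lf 0) ≃ (P i ⊕ Lf i) :=
      fun i => (cNatE φ i.val).trans (Equiv.cast (by rw [hiv i])) with hc
    have hcx : ∀ (i : ZMod k) (x : P 0 ⊕ Lf 0), HEq (c i x) (cNatE φ i.val x) :=
      fun i x => cast_heq _ _
    refine buildIso φ c ?_ ?_ ?_ ?_
    · intro i x
      have h1 : HEq (c (i+1) x) (cNatE φ (i+1).val x) := hcx _ x
      have h2 : HEq (cNatE φ (i+1).val x) (cNatE φ (i.val + 1) x) := by
        refine cNatE_congr φ hcor' hk _ _ ?_ x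
        rw [hiv (i+1)]
        push_cast
        rw [hiv i]
      have h3 : HEq (cNatE φ (i.val + 1) x)
          (stepE φ ((i.val : ℕ) : ZMod k) (cNatE φ i.val x)) := cast_heq _ _
      have h4 : HEq (stepE φ ((i.val : ℕ) : ZMod k) (cNatE φ i.val x)) (stepE φ i (c i x)) :=
        stepE_heq φ (hiv i) (hcx i x).symm
      exact eq_of_heq (((h1.trans h2).trans h3).trans h4)
    · intro i x y
      exact (dual_heq (hiv i).symm (hcx i x) (hcx i y)).trans (cNatE_dual φ i.val x y)
    · intro i hi x
      rw [isLeft_heq (x := c i x) (y := cNatE φ i.val x) (hiv i).symm (hcx i x), cNatE_isLeft]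
      have he : Even i.val := (even_natCast_zmod k hk hke i.val).mp (by rw [hiv i]; exact hi)
      rw [decide_eq_true he]
      cases x.isLeft <;> rfl
    · intro i hi x
      rw [isLeft_heq (x := c i x) (y := cNatE φ i.val x) (hiv i).symm (hcx i x), cNatE_isLeft]
      have he : ¬ Even i.val := fun h => hi (by rw [← hiv i]; exact (even_natCast_zmod k hk hke i.val).mpr h)
      rw [decide_eq_false he]
      cases x.isLeft <;> rfl
end
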